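/- Let X_1, …, X_n be independent real random variables with E[X_i] = 0 and E[|X_i|^p] < ∞ for all i, where 1 ≤ p ≤ 2. Then E[ | Σ_{i=1}^n X_i |^p ] ≤ 2 · Σ_{i=1}^n E[ |X_i|^p ]. -/

import Mathlib

open MeasureTheory ProbabilityTheory

noncomputable def sgnp (α u : ℝ) : ℝ := if 0 ≤ u then u ^ α else -((-u) ^ α)



lemma sgnp_of_nonneg {α u : ℝ} (hu : 0 ≤ u) : sgnp α u = u ^ α := if_pos hu
lemma sgnp_of_neg {α u : ℝ} (hu : u < 0) : sgnp α u = -((-u) ^ α) := if_neg (not_le.2 hu)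

lemma abs_sgnp (α u : ℝ) : |sgnp α u| = |u| ^ α := by
  rcases le_or_gt 0 u with h | h
  · rw [sgnp_of_nonneg h, abs_of_nonneg (Real.rpow_nonneg h _), abs_of_nonneg h]
  · rw [sgnp_of_neg h, abs_neg, abs_of_nonneg (Real.rpow_nonneg (by linarith) _), abs_of_neg h]

lemma rpow_add_le' {x y α : ℝ} (hx : 0 ≤ x) (hy : 0 ≤ y) (h0 : 0 ≤ α) (h1 : α ≤ 1) :
    (x + y) ^ α ≤ x ^ α + y ^ α := by
  have h := NNReal.rpow_add_le_add_rpow x.toNNReal y.toNNReal h0 h1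
  have h2 := NNReal.coe_le_coe.2 h
  rw [← Real.toNNReal_add hx hy] at h2
  simpa [NNReal.coe_rpow, Real.coe_toNNReal, hx, hy,
    Real.coe_toNNReal _ (by positivity : (0:ℝ) ≤ x + y)] using h2

lemma rpow_sub_le' {a b α : ℝ} (hb : 0 ≤ b) (hba : b ≤ a) (h0 : 0 ≤ α) (h1 : α ≤ 1) :
    a ^ α - b ^ α ≤ (a - b) ^ α := by
  have h := rpow_add_le' (sub_nonneg.2 hba) hb h0 h1
  rw [sub_add_cancel] at h
  linarith

lemma sgnp_mono {α : ℝ} (h0 : 0 ≤ α) : Monotone (sgnp α) := by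
  intro v u h
  rcases le_or_gt 0 v with hv | hv
  · rw [sgnp_of_nonneg hv, sgnp_of_nonneg (hv.trans h)]
    exact Real.rpow_le_rpow hv h h0
  · rcases le_or_gt 0 u with hu | hu
    · rw [sgnp_of_neg hv, sgnp_of_nonneg hu]
      have := Real.rpow_nonneg (by linarith : (0:ℝ) ≤ -v) α
      have := Real.rpow_nonneg hu α
      linarith
    · rw [sgnp_of_neg hv, sgnp_of_neg hu]
      have := Real.rpow_le_rpow (by linarith : (0:ℝ) ≤ -u) (by linarith : -u ≤ -v) h0
      linarith

lemma sgnp_diff_le {α u v : ℝ} (h0 : 0 ≤ α) (h1 : α ≤ 1) (hvu : v ≤ u) :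
    sgnp α u - sgnp α v ≤ 2 * (u - v) ^ α := by
  have huv0 : (0:ℝ) ≤ u - v := by linarith
  rcases le_or_gt 0 v with hv | hv
  · rw [sgnp_of_nonneg hv, sgnp_of_nonneg (hv.trans hvu)]
    have h := rpow_sub_le' hv hvu h0 h1
    have := Real.rpow_nonneg huv0 α
    linarith
  · rcases le_or_gt 0 u with hu | hu
    · rw [sgnp_of_neg hv, sgnp_of_nonneg hu]
      have h1' : u ^ α ≤ (u - v) ^ α := Real.rpow_le_rpow hu (by linarith) h0
      have h2' : (-v) ^ α ≤ (u - v) ^ α :=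
        Real.rpow_le_rpow (by linarith) (by linarith) h0
      linarith
    · rw [sgnp_of_neg hv, sgnp_of_neg hu]
      have h := rpow_sub_le' (by linarith : (0:ℝ) ≤ -u) (by linarith : -u ≤ -v) h0 h1
      have h2' : -v - -u = u - v := by ring
      rw [h2'] at h
      have := Real.rpow_nonneg huv0 α
      linarith

lemma abs_sgnp_diff {α u v : ℝ} (h0 : 0 ≤ α) (h1 : α ≤ 1) :
    |sgnp α u - sgnp α v| ≤ 2 * |u - v| ^ α := by
  rcases le_total v u with h | h
  · rw [abs_of_nonneg (sub_nonneg.2 (sgnp_mono h0 h)), abs_of_nonneg (by linarith : (0:ℝ) ≤ u - v)]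
    exact sgnp_diff_le h0 h1 h
  · rw [abs_of_nonpos (sub_nonpos.2 (sgnp_mono h0 h)), abs_of_nonpos (by linarith : u - v ≤ 0)]
    have := sgnp_diff_le h0 h1 h
    rw [show -(u - v) = v - u by ring]
    linarith


lemma measurable_sgnp (α : ℝ) (h0 : 0 ≤ α) : Measurable (sgnp α) := by
  unfold sgnp
  refine Measurable.ite (measurableSet_le measurable_const measurable_id) ?_ ?_
  · exact (continuous_id.rpow_const fun x => Or.inr h0).measurable
  · exact ((continuous_id.neg.rpow_const fun x => Or.inr h0).neg).measurable

lemma continuous_sgnp {α : ℝ} (h0 : 0 < α) : Continuous (sgnp α) := by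
  rw [continuous_iff_continuousAt]
  intro u
  rcases lt_trichotomy u 0 with hu | hu | hu
  · have hc : ContinuousAt (fun x : ℝ => -((-x) ^ α)) u := by
      have : ContinuousAt (fun x : ℝ => (-x) ^ α) u :=
        (Real.continuousAt_rpow_const (-u) α (Or.inl (by linarith))).comp continuousAt_neg
      exact this.neg
    apply hc.congr
    filter_upwards [eventually_lt_nhds hu] with x hx
    exact (sgnp_of_neg hx).symm
  · subst hu
    have habs : Continuous fun x : ℝ => |x| ^ α :=
      continuous_abs.rpow_const fun x => Or.inr h0.le
    have h0' : sgnp α 0 = 0 := by rw [sgnp_of_nonneg le_rfl, Real.zero_rpow h0.ne']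
    rw [ContinuousAt, h0']
    have htend : Filter.Tendsto (fun x : ℝ => |x| ^ α) (nhds 0) (nhds 0) := by
      have := habs.tendsto 0
      simpa [abs_zero, Real.zero_rpow h0.ne'] using this
    exact squeeze_zero_norm (fun x => by rw [Real.norm_eq_abs, abs_sgnp]) htend
  · have hc : ContinuousAt (fun x : ℝ => x ^ α) u :=
      Real.continuousAt_rpow_const u α (Or.inl hu.ne')
    apply hc.congr
    filter_upwards [eventually_gt_nhds hu] with x hx
    exact (sgnp_of_nonneg hx.le).symm

lemma hasDerivAt_abs_rpow_sgnp {p : ℝ} (hp : 1 < p) (x : ℝ) :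
    HasDerivAt (fun x : ℝ => |x| ^ p) (p * sgnp (p - 1) x) x := by
  have h := hasDerivAt_abs_rpow x hp
  convert h using 1
  rcases lt_trichotomy x 0 with hx | hx | hx
  · rw [sgnp_of_neg hx, abs_of_neg hx]
    rw [show p - 1 = (p - 2) + 1 by ring, Real.rpow_add_one (by linarith : -x ≠ 0)]
    ring
  · subst hx
    rw [sgnp_of_nonneg le_rfl, Real.zero_rpow (by linarith : p - 1 ≠ 0)]
    ring
  · rw [sgnp_of_nonneg hx.le, abs_of_pos hx]
    rw [show p - 1 = (p - 2) + 1 by ring, Real.rpow_add_one hx.ne']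
    ring


lemma keyB {p : ℝ} (hp1 : 1 ≤ p) (hp2 : p ≤ 2) (x y : ℝ) :
    |x + y| ^ p ≤ |x| ^ p + p * sgnp (p - 1) x * y + 2 * |y| ^ p := by
  have hp0 : p ≠ 0 := by linarith
  rcases eq_or_ne y 0 with rfl | hy
  · simp [abs_zero, Real.zero_rpow hp0]
  rcases eq_or_lt_of_le hp1 with hp | hp
  · subst hp
    simp only [Real.rpow_one]
    have h1 : |x + y| ≤ |x| + |y| := abs_add_le x y
    have h2 : |1 * sgnp (1 - 1) x * y| ≤ |y| := by
      rw [abs_mul, abs_mul, abs_one, one_mul, abs_sgnp, sub_self, Real.rpow_zero, one_mul]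
    have h3 := neg_abs_le (1 * sgnp (1 - 1) x * y)
    linarith
  · set α := p - 1 with hα
    have hα0 : 0 < α := by rw [hα]; linarith
    have hα1 : α ≤ 1 := by rw [hα]; linarith
    have hy' : (0:ℝ) < |y| := abs_pos.2 hy
    have line : ∀ t : ℝ, HasDerivAt (fun t : ℝ => |x + t * y| ^ p)
        ((p * sgnp α (x + t * y)) * y) t := by
      intro t
      have h1 : HasDerivAt (fun t : ℝ => x + t * y) y t := by
        simpa using (hasDerivAt_id t |>.mul_const y).const_add x
      exact (hasDerivAt_abs_rpow_sgnp hp (x + t * y)).comp t h1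
    have contg : Continuous fun t : ℝ => (p * sgnp α (x + t * y)) * y :=
      ((continuous_const.mul ((continuous_sgnp hα0).comp
        (continuous_const.add (continuous_id.mul continuous_const)))).mul continuous_const)
    have ftc : ∫ t in (0:ℝ)..1, (p * sgnp α (x + t * y)) * y =
        |x + y| ^ p - |x| ^ p := by
      have h := intervalIntegral.integral_eq_sub_of_hasDerivAt
        (f := fun t : ℝ => |x + t * y| ^ p)
        (f' := fun t : ℝ => (p * sgnp α (x + t * y)) * y)
        (fun t _ => line t) (contg.intervalIntegrable 0 1)
      simpa using h
    have hdiff : |x + y| ^ p - |x| ^ p - (p * sgnp α x) * y =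
        ∫ t in (0:ℝ)..1, ((p * sgnp α (x + t * y)) * y - (p * sgnp α x) * y) := by
      rw [intervalIntegral.integral_sub (contg.intervalIntegrable 0 1)
        (continuous_const.intervalIntegrable 0 1), ftc]
      simp
    have hbound : ∀ t ∈ Set.Icc (0:ℝ) 1,
        (p * sgnp α (x + t * y)) * y - (p * sgnp α x) * y ≤
          (2 * p * |y| ^ p) * t ^ α := by
      intro t ht
      have h2 : (sgnp α (x + t * y) - sgnp α x) * y ≤
          |sgnp α (x + t * y) - sgnp α x| * |y| :=
        (le_abs_self _).trans_eq (abs_mul _ _)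
      have h3 : |sgnp α (x + t * y) - sgnp α x| ≤ 2 * |t * y| ^ α := by
        have h := abs_sgnp_diff (u := x + t * y) (v := x) hα0.le hα1
        simpa using h
      have h4 : |t * y| ^ α = t ^ α * |y| ^ α := by
        rw [abs_mul, abs_of_nonneg ht.1, Real.mul_rpow ht.1 (abs_nonneg y)]
      have h5 : |y| ^ α * |y| = |y| ^ p := by
        rw [show p = α + 1 by rw [hα]; ring, Real.rpow_add hy', Real.rpow_one]
      have h6 : (sgnp α (x + t * y) - sgnp α x) * y ≤ 2 * t ^ α * |y| ^ p := by
        calc (sgnp α (x + t * y) - sgnp α x) * y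
            ≤ |sgnp α (x + t * y) - sgnp α x| * |y| := h2
          _ ≤ (2 * |t * y| ^ α) * |y| := mul_le_mul_of_nonneg_right h3 (abs_nonneg y)
          _ = 2 * t ^ α * (|y| ^ α * |y|) := by rw [h4]; ring
          _ = 2 * t ^ α * |y| ^ p := by rw [h5]
      calc (p * sgnp α (x + t * y)) * y - (p * sgnp α x) * y
          = p * ((sgnp α (x + t * y) - sgnp α x) * y) := by ring
        _ ≤ p * (2 * t ^ α * |y| ^ p) := mul_le_mul_of_nonneg_left h6 (by linarith)
        _ = (2 * p * |y| ^ p) * t ^ α := by ring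
    have hrhscont : Continuous fun t : ℝ => (2 * p * |y| ^ p) * t ^ α :=
      continuous_const.mul (continuous_id.rpow_const fun t => Or.inr hα0.le)
    have hmono := intervalIntegral.integral_mono_on (μ := MeasureTheory.volume) (by norm_num : (0:ℝ) ≤ 1)
      ((contg.sub continuous_const).intervalIntegrable 0 1)
      (hrhscont.intervalIntegrable 0 1) hbound
    have hval : ∫ t in (0:ℝ)..1, (2 * p * |y| ^ p) * t ^ α = 2 * |y| ^ p := by
      rw [intervalIntegral.integral_const_mul,
        integral_rpow (Or.inl (by linarith : (-1:ℝ) < α))]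
      rw [Real.one_rpow, Real.zero_rpow (by rw [hα]; intro h; apply hp0; linarith : α + 1 ≠ 0)]
      rw [show α + 1 = p by rw [hα]; ring]
      field_simp
      ring
    rw [hval] at hmono
    simp only [Pi.sub_apply] at hmono
    rw [← hdiff] at hmono
    linarith


lemma rpow_le_one_add_rpow {a α p : ℝ} (ha : 0 ≤ a) (h0 : 0 ≤ α) (hαp : α ≤ p) :
    a ^ α ≤ 1 + a ^ p := by
  rcases le_or_gt a 1 with h | h
  · have := Real.rpow_le_one ha h h0
    have := Real.rpow_nonneg ha p
    linarith
  · have := Real.rpow_le_rpow_of_exponent_le h.le hαp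
    have : a ^ α ≤ a ^ p := this
    linarith

lemma integrable_abs_rpow_of_memLp {Ω : Type*} [MeasurableSpace Ω] {P : Measure Ω}
    [IsProbabilityMeasure P] {p : ℝ} (hp : 0 < p) {f : Ω → ℝ}
    (hf : MemLp f (ENNReal.ofReal p) P) :
    Integrable (fun ω => |f ω| ^ p) P := by
  have h := hf.integrable_norm_rpow'
  simpa [Real.norm_eq_abs, ENNReal.toReal_ofReal hp.le] using h

lemma memLp_of_integrable_abs_rpow {Ω : Type*} [MeasurableSpace Ω] {P : Measure Ω}
    [IsProbabilityMeasure P] {p : ℝ} (hp : 0 < p) {f : Ω → ℝ} (hfm : Measurable f)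
    (hf : Integrable (fun ω => |f ω| ^ p) P) :
    MemLp f (ENNReal.ofReal p) P := by
  have hq0 : ENNReal.ofReal p ≠ 0 := by simp [ENNReal.ofReal_eq_zero, not_le, hp]
  have hqt : (ENNReal.ofReal p) ≠ ⊤ := ENNReal.ofReal_ne_top
  have h := (memLp_norm_rpow_iff (μ := P) (q := ENNReal.ofReal p) (p := ENNReal.ofReal p)
    (hfm.aestronglyMeasurable (μ := P)) hq0 hqt)
  rw [ENNReal.div_self hq0 hqt] at h
  apply h.1
  rw [memLp_one_iff_integrable]
  simpa [Real.norm_eq_abs, ENNReal.toReal_ofReal hp.le] using hf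

lemma step_lemma {Ω : Type*} [MeasurableSpace Ω] (P : Measure Ω) [IsProbabilityMeasure P]
    {p : ℝ} (hp1 : 1 ≤ p) (hp2 : p ≤ 2) {S X : Ω → ℝ}
    (hSm : Measurable S) (hXm : Measurable X)
    (hind : IndepFun S X P)
    (hS : MemLp S (ENNReal.ofReal p) P) (hX : MemLp X (ENNReal.ofReal p) P)
    (hmean : ∫ ω, X ω ∂P = 0) :
    ∫ ω, |S ω + X ω| ^ p ∂P ≤ (∫ ω, |S ω| ^ p ∂P) + 2 * ∫ ω, |X ω| ^ p ∂P := by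
  have hp0 : 0 < p := by linarith
  have hα0 : 0 ≤ p - 1 := by linarith
  set g : Ω → ℝ := fun ω => p * sgnp (p - 1) (S ω) with hg
  have hgm : Measurable g := measurable_const.mul ((measurable_sgnp _ hα0).comp hSm)
  have hintS : Integrable (fun ω => |S ω| ^ p) P := integrable_abs_rpow_of_memLp hp0 hS
  have hintX : Integrable (fun ω => |X ω| ^ p) P := integrable_abs_rpow_of_memLp hp0 hX
  have hintg : Integrable g P := by
    refine Integrable.mono' ((integrable_const (1:ℝ)).add hintS |>.const_mul p)
      hgm.aestronglyMeasurable ?_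
    filter_upwards with ω
    rw [hg, Real.norm_eq_abs, abs_mul, abs_of_pos hp0, abs_sgnp]
    have hb := rpow_le_one_add_rpow (abs_nonneg (S ω)) hα0 (by linarith : p - 1 ≤ p)
    calc p * |S ω| ^ (p - 1) ≤ p * (1 + |S ω| ^ p) :=
          mul_le_mul_of_nonneg_left hb hp0.le
      _ = p * ((fun ω => (1:ℝ)) ω + |S ω| ^ p) := rfl
  have hXint : Integrable X P := hX.integrable (by
    rw [ENNReal.one_le_ofReal]; exact hp1)
  have hindg : IndepFun g X P := hind.comp (measurable_const.mul (measurable_sgnp _ hα0)) measurable_id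
  have hintgX : Integrable (fun ω => g ω * X ω) P := hindg.integrable_mul hintg hXint
  have hmulzero : ∫ ω, g ω * X ω ∂P = 0 := by
    have h := hindg.integral_mul_eq_mul_integral hintg.aestronglyMeasurable hXint.aestronglyMeasurable
    simpa [Pi.mul_apply, hmean] using h
  have hintSX : Integrable (fun ω => |S ω + X ω| ^ p) P := by
    have hmem : MemLp (fun ω => S ω + X ω) (ENNReal.ofReal p) P := hS.add hX
    exact integrable_abs_rpow_of_memLp hp0 hmem
  have hint1 : Integrable (fun ω => |S ω| ^ p + g ω * X ω) P := hintS.add hintgX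
  have hint2 : Integrable (fun ω => 2 * |X ω| ^ p) P := hintX.const_mul 2
  have hrhs : Integrable (fun ω => |S ω| ^ p + g ω * X ω + 2 * |X ω| ^ p) P :=
    hint1.add hint2
  have hmono := integral_mono hintSX hrhs
    (fun ω => keyB hp1 hp2 (S ω) (X ω))
  have hsplit : ∫ ω, (|S ω| ^ p + g ω * X ω + 2 * |X ω| ^ p) ∂P =
      (∫ ω, |S ω| ^ p ∂P) + (∫ ω, g ω * X ω ∂P) + 2 * ∫ ω, |X ω| ^ p ∂P := by
    rw [integral_add hint1 hint2, integral_add hintS hintgX, integral_const_mul]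
  rw [hsplit, hmulzero] at hmono
  linarith



/-- von Bahr–Esseen inequality: for independent centered real random
variables `X_1, …, X_n` with finite `p`-th absolute moments, `1 ≤ p ≤ 2`,
`E|Σ X_i|^p ≤ 2 Σ E|X_i|^p`. -/
theorem von_bahr_esseen
    {Ω : Type*} [MeasurableSpace Ω] (P : Measure Ω) [IsProbabilityMeasure P]
    (n : ℕ) (X : Fin n → Ω → ℝ) (hmeas : ∀ i, Measurable (X i))
    (hindep : iIndepFun X P)
    (p : ℝ) (hp1 : 1 ≤ p) (hp2 : p ≤ 2)
    (hmean : ∀ i, ∫ ω, X i ω ∂P = 0)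
    (hmom : ∀ i, Integrable (fun ω => |X i ω| ^ p) P) :
    ∫ ω, |∑ i, X i ω| ^ p ∂P ≤ 2 * ∑ i, ∫ ω, |X i ω| ^ p ∂P := by
  have hp0 : (0:ℝ) < p := by linarith
  have hmem : ∀ i, MemLp (X i) (ENNReal.ofReal p) P := fun i =>
    memLp_of_integrable_abs_rpow hp0 (hmeas i) (hmom i)
  have key : ∀ s : Finset (Fin n),
      ∫ ω, |∑ i ∈ s, X i ω| ^ p ∂P ≤ 2 * ∑ i ∈ s, ∫ ω, |X i ω| ^ p ∂P := by
    intro s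
    induction s using Finset.induction_on with
    | empty => simp [Real.zero_rpow hp0.ne']
    | @insert a s ha ih =>
      have hSm : Measurable fun ω => ∑ i ∈ s, X i ω := by
        apply Finset.measurable_sum
        exact fun i _ => hmeas i
      have hSmem : MemLp (fun ω => ∑ i ∈ s, X i ω) (ENNReal.ofReal p) P :=
        memLp_finsetSum s fun i _ => hmem i
      have hind : IndepFun (fun ω => ∑ i ∈ s, X i ω) (X a) P := by
        have h := hindep.indepFun_finsetSum_of_notMem hmeas ha
        have he : (∑ j ∈ s, X j) = fun ω => ∑ i ∈ s, X i ω := by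
          funext ω; simp [Finset.sum_apply]
        rwa [he] at h
      have hstep := step_lemma P hp1 hp2 hSm (hmeas a) hind hSmem (hmem a) (hmean a)
      have heq : ∀ ω, ∑ i ∈ insert a s, X i ω = (∑ i ∈ s, X i ω) + X a ω := by
        intro ω; rw [Finset.sum_insert ha]; ring
      have habs : ∫ ω, |∑ i ∈ insert a s, X i ω| ^ p ∂P =
          ∫ ω, |(∑ i ∈ s, X i ω) + X a ω| ^ p ∂P := by
        congr 1; funext ω; rw [heq ω]
      rw [habs, Finset.sum_insert ha]
      have hnn : 0 ≤ ∫ ω, |X a ω| ^ p ∂P :=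
        integral_nonneg fun ω => Real.rpow_nonneg (abs_nonneg _) p
      linarith
  simpa using key Finset.univ
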